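/- Let f ∈ K_s(φ) (i.e., f analytic normalized on 𝔻 with -z²f'(z)/(g(z)g(-z)) = φ(w(z)) for some g starlike of order 1/2 and Schwarz function w, where φ(z)=1+B₁z+B₂z²+⋯, B₁>0). Then the Taylor coefficients d₂, d₃ of the inverse function f⁻¹ satisfy, for every μ ∈ ℂ, |d₃ - μd₂²| ≤ 1/3 + max(B₁/3, |B₂/3 - (2-μ)B₁²/4|). -/

import Mathlib

open Complex Metric Filter Set

lemma aux_evb {P : ℂ → Prop} (h : ∀ z ∈ ball (0:ℂ) 1, P z) : ∀ᶠ z in nhds (0:ℂ), P z := by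
  filter_upwards [isOpen_ball.eventually_mem (mem_ball_self one_pos)] with z hz using h z hz

lemma aux_dslope_analytic {u : ℂ → ℂ} (hu : AnalyticOnNhd ℂ u (ball 0 1)) :
    AnalyticOnNhd ℂ (dslope u 0) (ball 0 1) := by
  intro z hz
  rcases eq_or_ne z 0 with rfl | hne
  · obtain ⟨p, hp⟩ := hu 0 hz
    exact hp.has_fpower_series_dslope_fslope.analyticAt
  · have h1 : AnalyticAt ℂ (fun y => (y - 0)⁻¹ • (u y - u 0)) z := by
      apply AnalyticAt.fun_smul
      · exact ((analyticAt_id.sub analyticAt_const).inv (by simpa using hne))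
      · exact (hu z hz).sub analyticAt_const
    apply h1.congr
    filter_upwards [isOpen_ne.eventually_mem hne] with y hy
    rw [dslope_of_ne _ hy, slope_def_module]

lemma aux_fac {u : ℂ → ℂ} (h0 : u 0 = 0) :
    ∀ z, u z = z * dslope u 0 z := by
  intro z
  have := sub_smul_dslope u 0 z
  simp only [sub_zero, smul_eq_mul, h0] at this
  exact this.symm

lemma aux_deriv_fac {u ψ : ℂ → ℂ} (hψ : AnalyticOnNhd ℂ ψ (ball 0 1))
    (hfac : ∀ z ∈ ball (0:ℂ) 1, u z = z * ψ z) :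
    ∀ z ∈ ball (0:ℂ) 1, deriv u z = ψ z + z * deriv ψ z := by
  intro z hz
  have hev : u =ᶠ[nhds z] fun y => y * ψ y := by
    filter_upwards [isOpen_ball.eventually_mem hz] with y hy using hfac y hy
  rw [hev.deriv_eq, deriv_fun_mul differentiableAt_fun_id ((hψ z hz).differentiableAt)]
  simp


lemma aux_schwarz_pick {ψ : ℂ → ℂ} (hψ : DifferentiableOn ℂ ψ (ball 0 1))
    (hb : ∀ z ∈ ball (0:ℂ) 1, ‖ψ z‖ ≤ 1) :
    ‖deriv ψ 0‖ ≤ 1 - ‖ψ 0‖ ^ 2 := by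
  have h0 : (0:ℂ) ∈ ball (0:ℂ) 1 := by simp
  have ha : ‖ψ 0‖ ≤ 1 := hb 0 h0
  set a := ψ 0 with haa
  rcases eq_or_lt_of_le ha with heq | hlt
  · -- |ψ 0| = 1 : max modulus, ψ constant
    have hmax : IsMaxOn (norm ∘ ψ) (ball (0:ℂ) 1) 0 := by
      intro y hy
      simp only [Function.comp_apply, Set.mem_setOf_eq]
      calc ‖ψ y‖ ≤ 1 := hb y hy
        _ = ‖ψ 0‖ := heq.symm
    have hconst := Complex.eqOn_of_isPreconnected_of_isMaxOn_norm
      (convex_ball (0:ℂ) 1).isPreconnected isOpen_ball hψ h0 hmax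
    have : deriv ψ 0 = 0 := by
      have hev : ψ =ᶠ[nhds 0] (fun _ => a) := by
        filter_upwards [isOpen_ball.eventually_mem h0] with y hy using hconst hy
      rw [hev.deriv_eq, deriv_const]
    rw [this, heq]
    simp
  · -- |a| < 1
    set den : ℂ → ℂ := fun z => 1 - (starRingEnd ℂ) a * ψ z with hden
    have hdne : ∀ z ∈ ball (0:ℂ) 1, den z ≠ 0 := by
      intro z hz hzero
      have h1 : (starRingEnd ℂ) a * ψ z = 1 := by
        have := sub_eq_zero.mp hzero; linear_combination -this
      have : ‖(starRingEnd ℂ) a * ψ z‖ ≤ ‖a‖ * 1 := by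
        rw [norm_mul, Complex.norm_conj]
        exact mul_le_mul_of_nonneg_left (hb z hz) (norm_nonneg a)
      rw [h1] at this; simp at this; linarith
    have hkey : ∀ x : ℂ, ‖x‖ ≤ 1 →
        ‖x - a‖ ≤ ‖1 - (starRingEnd ℂ) a * x‖ := by
      intro x hx
      have hna : normSq a ≤ 1 := by rw [← Complex.sq_norm]; nlinarith [norm_nonneg a]
      have hnx : normSq x ≤ 1 := by rw [← Complex.sq_norm]; nlinarith [norm_nonneg x]
      rw [Complex.norm_def, Complex.norm_def]
      apply Real.sqrt_le_sqrt
      have e : normSq (1 - (starRingEnd ℂ) a * x) - normSq (x - a)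
          = (1 - normSq a) * (1 - normSq x) := by
        simp only [Complex.normSq_apply, Complex.sub_re, Complex.sub_im, Complex.mul_re,
          Complex.mul_im, Complex.one_re, Complex.one_im, Complex.conj_re, Complex.conj_im]
        ring
      nlinarith
    set Φ : ℂ → ℂ := fun z => (ψ z - a) * (den z)⁻¹ with hPhi
    have hΦd : DifferentiableOn ℂ Φ (ball (0:ℂ) 1) := by
      apply DifferentiableOn.mul (hψ.sub (differentiableOn_const a))
      exact ((differentiableOn_const (1:ℂ)).sub ((differentiableOn_const _).mul hψ)).inv hdne
    have hΦ0 : Φ 0 = 0 := by simp [hPhi, haa]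
    have hΦb : ∀ z ∈ ball (0:ℂ) 1, ‖Φ z‖ ≤ 1 := by
      intro z hz
      rw [hPhi]
      simp only [← div_eq_mul_inv, norm_div]
      rw [div_le_one (norm_pos_iff.mpr (hdne z hz))]
      exact hkey (ψ z) (hb z hz)
    have hΦderiv : ∀ ε : ℝ, 0 < ε → ‖deriv Φ 0‖ ≤ (1 + ε) / 1 := by
      intro ε hε
      apply Complex.norm_deriv_le_div_of_mapsTo_ball hΦd _ one_pos
      intro z hz
      rw [hΦ0, mem_closedBall, dist_zero_right]
      calc ‖Φ z‖ ≤ 1 := hΦb z hz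
        _ ≤ 1 + ε := by linarith
    have hΦd1 : ‖deriv Φ 0‖ ≤ 1 := by
      by_contra hcon
      push_neg at hcon
      have := hΦderiv ((‖deriv Φ 0‖ - 1)/2) (by linarith)
      rw [div_one] at this; linarith
    -- compute deriv Φ 0
    have hψda : DifferentiableAt ℂ ψ 0 := hψ.differentiableAt (isOpen_ball.mem_nhds h0)
    have hdend : DifferentiableAt ℂ den 0 :=
      (differentiableAt_const _).sub ((differentiableAt_const _).mul hψda)
    have hderivΦ : deriv Φ 0 = deriv ψ 0 * (den 0)⁻¹ := by
      rw [hPhi]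
      rw [deriv_fun_mul (hψda.sub_const a) (hdend.fun_inv (hdne 0 h0))]
      rw [deriv_sub_const, ← haa, sub_self, zero_mul, add_zero]
    have hden0 : ‖den 0‖ = 1 - ‖a‖ ^ 2 := by
      have : den 0 = ((1 - normSq a : ℝ) : ℂ) := by
        simp only [hden]
        rw [← haa, ← Complex.normSq_eq_conj_mul_self]
        push_cast
        ring
      rw [this, Complex.norm_real, Real.norm_eq_abs, _root_.abs_of_nonneg (by rw [← Complex.sq_norm]; nlinarith [norm_nonneg a, hlt]),
        ← Complex.sq_norm]
    rw [hderivΦ, norm_mul, norm_inv, hden0] at hΦd1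
    have hpos : 0 < 1 - ‖a‖ ^ 2 := by nlinarith [norm_nonneg a]
    rw [mul_inv_le_iff₀ hpos, one_mul] at hΦd1
    exact hΦd1


lemma aux_schwarz_coeff {u : ℂ → ℂ} (hu : AnalyticOnNhd ℂ u (ball 0 1)) (h0 : u 0 = 0)
    (hdsl : AnalyticOnNhd ℂ (dslope u 0) (ball 0 1))
    (hb : ∀ z ∈ ball (0:ℂ) 1, ‖u z‖ < 1) :
    ‖deriv u 0‖ ≤ 1 ∧
    ‖deriv (deriv u) 0‖ / 2 ≤ 1 - ‖deriv u 0‖ ^ 2 := by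
  have h0m : (0:ℂ) ∈ ball (0:ℂ) 1 := mem_ball_self one_pos
  set ψ := dslope u 0 with hψdef
  have hmaps : Set.MapsTo u (ball (0:ℂ) 1) (ball (u 0) 1) := by
    intro z hz
    rw [h0, mem_ball, dist_zero_right]
    exact hb z hz
  have hψb : ∀ z ∈ ball (0:ℂ) 1, ‖ψ z‖ ≤ 1 := by
    intro z hz
    have := Complex.norm_dslope_le_div_of_mapsTo_ball hu.differentiableOn (hmaps.mono_right ball_subset_closedBall) hz
    simpa using this
  have hψ0 : ψ 0 = deriv u 0 := dslope_same u 0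
  have hderiv_u : ∀ z ∈ ball (0:ℂ) 1, deriv u z = ψ z + z * deriv ψ z := by
    intro z hz
    have hev : u =ᶠ[nhds z] fun y => y * ψ y := by
      filter_upwards [isOpen_ball.eventually_mem hz] with y hy
      have := sub_smul_dslope u 0 y
      simp only [sub_zero, smul_eq_mul, h0, sub_zero] at this
      exact this.symm
    rw [hev.deriv_eq, deriv_fun_mul differentiableAt_fun_id ((hdsl z hz).differentiableAt)]
    simp
  have h2 : deriv (deriv u) 0 = 2 * deriv ψ 0 := by
    have hev : deriv u =ᶠ[nhds (0:ℂ)] fun z => ψ z + z * deriv ψ z := aux_evb hderiv_u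
    have hdd : DifferentiableAt ℂ (deriv ψ) 0 := ((hdsl.deriv) 0 h0m).differentiableAt
    rw [hev.deriv_eq, deriv_fun_add ((hdsl 0 h0m).differentiableAt)
      (differentiableAt_fun_id.fun_mul hdd),
      deriv_fun_mul differentiableAt_fun_id hdd, deriv_id'']
    ring
  have hsp := aux_schwarz_pick hdsl.differentiableOn hψb
  constructor
  · rw [← hψ0]; exact hψb 0 h0m
  · rw [h2, ← hψ0]
    calc ‖2 * deriv ψ 0‖ / 2 = ‖deriv ψ 0‖ := by
          rw [norm_mul, Complex.norm_two]; ring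
      _ ≤ 1 - ‖ψ 0‖ ^ 2 := hsp

set_option maxHeartbeats 2000000 in
theorem fekete_szego_inverse_Ks (f g w φ finv : ℂ → ℂ)
    (hf : AnalyticOnNhd ℂ f (ball (0:ℂ) 1)) (hf0 : f 0 = 0) (hf1 : deriv f 0 = 1)
    (hinj : Set.InjOn f (ball (0:ℂ) 1))
    (hg : AnalyticOnNhd ℂ g (ball (0:ℂ) 1)) (hg0 : g 0 = 0) (hg1 : deriv g 0 = 1)
    (hstar : ∀ z ∈ ball (0:ℂ) 1, z ≠ 0 → 1 / 2 < (z * deriv g z / g z).re)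
    (hw : AnalyticOnNhd ℂ w (ball (0:ℂ) 1)) (hw0 : w 0 = 0)
    (hwb : ∀ z ∈ ball (0:ℂ) 1, ‖w z‖ < 1)
    (hφ : AnalyticOnNhd ℂ φ (ball (0:ℂ) 1)) (hφ0 : φ 0 = 1)
    (B₁ : ℝ) (hB₁ : 0 < B₁) (hB₁' : iteratedDeriv 1 φ 0 = (B₁ : ℂ))
    (B₂ : ℂ) (hB₂ : B₂ = iteratedDeriv 2 φ 0 / 2)
    (hsub : ∀ z ∈ ball (0:ℂ) 1, z ≠ 0 →
      -(z ^ 2 * deriv f z) / (g z * g (-z)) = φ (w z))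
    (hfinv : AnalyticAt ℂ finv 0)
    (hleft : ∀ᶠ z in nhds (0:ℂ), finv (f z) = z)
    (d₂ d₃ : ℂ) (hd₂ : d₂ = iteratedDeriv 2 finv 0 / 2) (hd₃ : d₃ = iteratedDeriv 3 finv 0 / 6) :
    ∀ μ : ℂ, ‖d₃ - μ * d₂ ^ 2‖
      ≤ 1 / 3 + max (B₁ / 3) (‖B₂ / 3 - (2 - μ) * (B₁ : ℂ) ^ 2 / 4‖) := by
  have h0m : (0:ℂ) ∈ ball (0:ℂ) 1 := mem_ball_self one_pos
  have hmem : ∀ {z : ℂ}, z ∈ ball (0:ℂ) 1 → -z ∈ ball (0:ℂ) 1 := by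
    intro z hz
    rw [mem_ball_zero_iff] at hz ⊢
    simpa using hz
  -- ψg : the factor g z = z * ψg z
  set ψg := dslope g 0 with hψgdef
  have hψg_an : AnalyticOnNhd ℂ ψg (ball 0 1) := aux_dslope_analytic hg
  have hgfac : ∀ z, g z = z * ψg z := aux_fac hg0
  have hψg0 : ψg 0 = 1 := by rw [hψgdef, dslope_same, hg1]
  have hgne : ∀ z ∈ ball (0:ℂ) 1, z ≠ 0 → g z ≠ 0 := by
    intro z hz hne hzero
    have := hstar z hz hne
    rw [hzero, div_zero] at this
    simp at this
    linarith
  have hψgne : ∀ z ∈ ball (0:ℂ) 1, ψg z ≠ 0 := by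
    intro z hz
    rcases eq_or_ne z 0 with rfl | hne
    · rw [hψg0]; exact one_ne_zero
    · intro hzero
      exact hgne z hz hne (by rw [hgfac z, hzero, mul_zero])
  have hderiv_g : ∀ z ∈ ball (0:ℂ) 1, deriv g z = ψg z + z * deriv ψg z :=
    aux_deriv_fac hψg_an (fun z _ => hgfac z)
  -- the function p with Re p > 1/2
  set q : ℂ → ℂ := fun z => deriv ψg z / ψg z with hqdef
  have hq_an : AnalyticOnNhd ℂ q (ball 0 1) := fun z hz =>
    ((hψg_an.deriv) z hz).div (hψg_an z hz) (hψgne z hz)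
  set p : ℂ → ℂ := fun z => 1 + z * q z with hpdef
  have hp_an : AnalyticOnNhd ℂ p (ball 0 1) := fun z hz =>
    analyticAt_const.add (analyticAt_id.mul (hq_an z hz))
  have hp0 : p 0 = 1 := by simp [hpdef]
  have hpval : ∀ z ∈ ball (0:ℂ) 1, z ≠ 0 → p z = z * deriv g z / g z := by
    intro z hz hne
    rw [hgfac z, hderiv_g z hz, hpdef, hqdef]
    field_simp [hψgne z hz]
  have hpre : ∀ z ∈ ball (0:ℂ) 1, 1/2 < (p z).re := by
    intro z hz
    rcases eq_or_ne z 0 with rfl | hne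
    · rw [hp0]; norm_num
    · rw [hpval z hz hne]; exact hstar z hz hne
  have hpne : ∀ z ∈ ball (0:ℂ) 1, p z ≠ 0 := by
    intro z hz hzero
    have := hpre z hz
    rw [hzero] at this
    simp at this
    linarith
  -- the Schwarz function ω
  set ω : ℂ → ℂ := fun z => 1 - (p z)⁻¹ with hωdef
  have hω_an : AnalyticOnNhd ℂ ω (ball 0 1) := fun z hz =>
    analyticAt_const.sub ((hp_an z hz).inv (hpne z hz))
  have hω0 : ω 0 = 0 := by simp [hωdef, hp0]
  have hωb : ∀ z ∈ ball (0:ℂ) 1, ‖ω z‖ < 1 := by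
    intro z hz
    have hrw : ω z = (p z - 1) / p z := by
      rw [hωdef]
      field_simp [hpne z hz]
    rw [hrw, norm_div, div_lt_one (norm_pos_iff.mpr (hpne z hz))]
    have h1 : normSq (p z - 1) < normSq (p z) := by
      have := hpre z hz
      simp only [Complex.normSq_apply, Complex.sub_re, Complex.sub_im, Complex.one_re,
        Complex.one_im]
      nlinarith
    calc ‖p z - 1‖ = Real.sqrt (normSq (p z - 1)) := Complex.norm_def _
      _ < Real.sqrt (normSq (p z)) := Real.sqrt_lt_sqrt (normSq_nonneg _) h1
      _ = ‖p z‖ := (Complex.norm_def _).symm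
  obtain ⟨hω1, hω2⟩ := aux_schwarz_coeff hω_an hω0 (aux_dslope_analytic hω_an) hωb
  -- derivatives of ω in terms of p
  have hdω : ∀ z ∈ ball (0:ℂ) 1, deriv ω z = deriv p z / p z ^ 2 := by
    intro z hz
    rw [hωdef]
    rw [deriv_const_sub, deriv_fun_inv'' ((hp_an z hz).differentiableAt) (hpne z hz)]
    rw [neg_div, neg_neg]
  have hω1val : deriv ω 0 = deriv p 0 := by
    rw [hdω 0 h0m, hp0]; simp
  have hω2val : deriv (deriv ω) 0 = deriv (deriv p) 0 - 2 * (deriv p 0) ^ 2 := by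
    have hev : deriv ω =ᶠ[nhds (0:ℂ)] fun z => deriv p z / p z ^ 2 := aux_evb hdω
    rw [hev.deriv_eq, deriv_fun_div ((hp_an.deriv 0 h0m).differentiableAt)
      (((hp_an 0 h0m).differentiableAt).fun_pow 2) (by rw [hp0]; norm_num),
      deriv_fun_pow ((hp_an 0 h0m).differentiableAt) 2, hp0]
    simp
    ring
  -- derivatives of p in terms of ψg
  have hdp : ∀ z ∈ ball (0:ℂ) 1, deriv p z = q z + z * deriv q z := by
    intro z hz
    rw [hpdef]
    rw [deriv_const_add, deriv_fun_mul differentiableAt_fun_id ((hq_an z hz).differentiableAt)]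
    simp
  have hq0 : q 0 = deriv ψg 0 := by rw [hqdef]; simp [hψg0]
  have hdp0 : deriv p 0 = deriv ψg 0 := by rw [hdp 0 h0m, hq0]; simp
  have hdq0 : deriv q 0 = deriv (deriv ψg) 0 - (deriv ψg 0) ^ 2 := by
    rw [hqdef, deriv_fun_div ((hψg_an.deriv 0 h0m).differentiableAt)
      ((hψg_an 0 h0m).differentiableAt) (hψgne 0 h0m), hψg0]
    simp
    ring
  have hddp0 : deriv (deriv p) 0 = 2 * deriv q 0 := by
    have hev : deriv p =ᶠ[nhds (0:ℂ)] fun z => q z + z * deriv q z := aux_evb hdp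
    rw [hev.deriv_eq, deriv_fun_add ((hq_an 0 h0m).differentiableAt)
      (differentiableAt_fun_id.fun_mul ((hq_an.deriv 0 h0m).differentiableAt)),
      deriv_fun_mul differentiableAt_fun_id ((hq_an.deriv 0 h0m).differentiableAt), deriv_id'']
    ring
  -- the even function V with g z * g (-z) = -(z^2 * V z)
  set V : ℂ → ℂ := fun z => ψg z * ψg (-z) with hVdef
  have hψgneg_an : ∀ z ∈ ball (0:ℂ) 1, AnalyticAt ℂ (fun y => ψg (-y)) z := by
    intro z hz
    have h1 := (hψg_an (-z) (hmem hz)).comp ((analyticAt_id (𝕜 := ℂ) (z := z)).neg)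
    exact h1.congr (by filter_upwards with y using by simp [Function.comp])
  have hψgnegd_an : ∀ z ∈ ball (0:ℂ) 1, AnalyticAt ℂ (fun y => deriv ψg (-y)) z := by
    intro z hz
    have h1 := ((hψg_an.deriv) (-z) (hmem hz)).comp ((analyticAt_id (𝕜 := ℂ) (z := z)).neg)
    exact h1.congr (by filter_upwards with y using by simp [Function.comp])
  have hV_an : AnalyticOnNhd ℂ V (ball 0 1) := fun z hz =>
    (hψg_an z hz).mul (hψgneg_an z hz)
  have hV0 : V 0 = 1 := by rw [hVdef]; simp [hψg0]
  have hVne : ∀ z ∈ ball (0:ℂ) 1, V z ≠ 0 := fun z hz =>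
    mul_ne_zero (hψgne z hz) (hψgne (-z) (hmem hz))
  have hgg : ∀ z ∈ ball (0:ℂ) 1, g z * g (-z) = -(z ^ 2 * V z) := by
    intro z hz
    rw [hgfac z, hgfac (-z), hVdef]
    ring
  have hdV : ∀ z ∈ ball (0:ℂ) 1, deriv V z
      = deriv ψg z * ψg (-z) - ψg z * deriv ψg (-z) := by
    intro z hz
    rw [hVdef, deriv_fun_mul ((hψg_an z hz).differentiableAt) ((hψgneg_an z hz).differentiableAt),
      deriv_comp_neg (f := ψg) (x := z)]
    ring
  have hdV0 : deriv V 0 = 0 := by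
    have heven : (fun z => V (-z)) = V := by
      funext z; rw [hVdef]; simp only [neg_neg]; ring
    have h1 := deriv_comp_neg (f := V) (x := 0)
    rw [heven, neg_zero] at h1
    have h3 : (2:ℂ) * deriv V 0 = 0 := by linear_combination h1
    simpa using h3
  have hddV0 : deriv (deriv V) 0
      = 2 * deriv (deriv ψg) 0 - 2 * (deriv ψg 0) ^ 2 := by
    have hev : deriv V =ᶠ[nhds (0:ℂ)]
        (fun z => deriv ψg z * ψg (-z) - ψg z * deriv ψg (-z)) := aux_evb hdV
    have d1 : DifferentiableAt ℂ (fun z => deriv ψg z * ψg (-z)) 0 :=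
      ((hψg_an.deriv 0 h0m).differentiableAt).mul ((hψgneg_an 0 h0m).differentiableAt)
    have d2 : DifferentiableAt ℂ (fun z => ψg z * deriv ψg (-z)) 0 :=
      ((hψg_an 0 h0m).differentiableAt).mul ((hψgnegd_an 0 h0m).differentiableAt)
    rw [hev.deriv_eq, deriv_fun_sub d1 d2,
      deriv_fun_mul ((hψg_an.deriv 0 h0m).differentiableAt) ((hψgneg_an 0 h0m).differentiableAt),
      deriv_fun_mul ((hψg_an 0 h0m).differentiableAt) ((hψgnegd_an 0 h0m).differentiableAt),
      deriv_comp_neg (f := ψg) (x := 0), deriv_comp_neg (f := deriv ψg) (x := 0), neg_zero, hψg0]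
    ring
  -- the key bound |V''(0)|/2 ≤ 1
  have hDV : ‖deriv (deriv V) 0‖ / 2 ≤ 1 := by
    have e : deriv (deriv V) 0 = deriv (deriv ω) 0 + 2 * (deriv ω 0) ^ 2 := by
      rw [hddV0, hω2val, hω1val, hdp0, hddp0, hdq0]
      ring
    rw [e]
    have t1 : ‖deriv (deriv ω) 0 + 2 * (deriv ω 0) ^ 2‖
        ≤ ‖deriv (deriv ω) 0‖ + 2 * (‖deriv ω 0‖) ^ 2 := by
      calc ‖deriv (deriv ω) 0 + 2 * (deriv ω 0) ^ 2‖
          ≤ ‖deriv (deriv ω) 0‖ + ‖2 * (deriv ω 0) ^ 2‖ :=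
            norm_add_le _ _
        _ = ‖deriv (deriv ω) 0‖ + 2 * (‖deriv ω 0‖) ^ 2 := by
            rw [norm_mul, norm_pow, Complex.norm_two]
    nlinarith [hω2, norm_nonneg (deriv ω 0)]
  -- coefficients of φ
  have hφd0 : deriv φ 0 = (B₁ : ℂ) := by rw [← iteratedDeriv_one]; exact hB₁'
  have hddφ0 : deriv (deriv φ) 0 = 2 * B₂ := by
    have h2 : iteratedDeriv 2 φ = deriv (deriv φ) := by
      rw [show (2:ℕ) = 1 + 1 from rfl, iteratedDeriv_succ, iteratedDeriv_one]
    rw [← h2, hB₂]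
    ring
  -- Schwarz coefficients of w
  obtain ⟨hc1, hc2⟩ := aux_schwarz_coeff hw hw0 (aux_dslope_analytic hw) hwb
  -- the function u = φ ∘ w
  have hwmem : ∀ z ∈ ball (0:ℂ) 1, w z ∈ ball (0:ℂ) 1 := by
    intro z hz
    rw [mem_ball_zero_iff]
    exact hwb z hz
  set u : ℂ → ℂ := fun z => φ (w z) with hudef
  have hu_an : AnalyticOnNhd ℂ u (ball 0 1) := by
    intro z hz
    have h1 := (hφ (w z) (hwmem z hz)).comp (hw z hz)
    exact h1.congr (by filter_upwards with y using by simp [Function.comp, hudef])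
  have hu0 : u 0 = 1 := by rw [hudef]; simp only [hw0]; exact hφ0
  have hdu : ∀ z ∈ ball (0:ℂ) 1, deriv u z = deriv φ (w z) * deriv w z := by
    intro z hz
    have := deriv_comp (x := z) ((hφ (w z) (hwmem z hz)).differentiableAt) ((hw z hz).differentiableAt)
    simpa [Function.comp_def] using this
  have hdu0 : deriv u 0 = (B₁ : ℂ) * deriv w 0 := by rw [hdu 0 h0m, hw0, hφd0]
  have hdφw_an : ∀ z ∈ ball (0:ℂ) 1, AnalyticAt ℂ (fun y => deriv φ (w y)) z := by
    intro z hz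
    have h1 := ((hφ.deriv) (w z) (hwmem z hz)).comp (hw z hz)
    exact h1.congr (by filter_upwards with y using by simp [Function.comp])
  have hddu0 : deriv (deriv u) 0
      = 2 * B₂ * (deriv w 0) ^ 2 + (B₁ : ℂ) * deriv (deriv w) 0 := by
    have hev : deriv u =ᶠ[nhds (0:ℂ)] fun z => deriv φ (w z) * deriv w z := aux_evb hdu
    rw [hev.deriv_eq, deriv_fun_mul ((hdφw_an 0 h0m).differentiableAt)
      ((hw.deriv 0 h0m).differentiableAt)]
    have hc : deriv (fun y => deriv φ (w y)) 0 = deriv (deriv φ) (w 0) * deriv w 0 := by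
      have := deriv_comp (x := 0) (((hφ.deriv) (w 0) (hwmem 0 h0m)).differentiableAt)
        ((hw 0 h0m).differentiableAt)
      simpa [Function.comp_def] using this
    rw [hc, hw0, hddφ0, hφd0]
    ring
  -- the main identity deriv f = u * V on the ball
  have hfid_ne : ∀ z ∈ ball (0:ℂ) 1, z ≠ 0 → deriv f z = u z * V z := by
    intro z hz hne
    have hb : g z * g (-z) ≠ 0 := by
      rw [hgg z hz]
      exact neg_ne_zero.mpr (mul_ne_zero (pow_ne_zero 2 hne) (hVne z hz))
    have h1 := (div_eq_iff hb).mp (hsub z hz hne)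
    rw [hgg z hz] at h1
    have h2 : z ^ 2 * deriv f z = z ^ 2 * (u z * V z) := by
      rw [hudef]
      linear_combination -h1
    exact mul_left_cancel₀ (pow_ne_zero 2 hne) h2
  have hfid : ∀ z ∈ ball (0:ℂ) 1, deriv f z = u z * V z := by
    intro z hz
    rcases eq_or_ne z 0 with rfl | hne
    · have hcont1 : Tendsto (deriv f) (nhds (0:ℂ)) (nhds (deriv f 0)) :=
        ((hf.deriv) 0 h0m).continuousAt
      have hcont2 : Tendsto (fun z => u z * V z) (nhds (0:ℂ)) (nhds (u 0 * V 0)) :=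
        ((hu_an 0 h0m).mul (hV_an 0 h0m)).continuousAt
      have hev : (fun y => u y * V y) =ᶠ[nhdsWithin (0:ℂ) {(0:ℂ)}ᶜ] deriv f := by
        filter_upwards [eventually_nhdsWithin_of_eventually_nhds
          (isOpen_ball.eventually_mem h0m), eventually_mem_nhdsWithin] with y hy hy0
        exact (hfid_ne y hy hy0).symm
      have l1 : Tendsto (deriv f) (nhdsWithin (0:ℂ) {(0:ℂ)}ᶜ) (nhds (deriv f 0)) :=
        hcont1.mono_left nhdsWithin_le_nhds
      have l2 : Tendsto (deriv f) (nhdsWithin (0:ℂ) {(0:ℂ)}ᶜ) (nhds (u 0 * V 0)) :=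
        (hcont2.mono_left nhdsWithin_le_nhds).congr' hev
      exact tendsto_nhds_unique l1 l2
    · exact hfid_ne z hz hne
  have hA2 : deriv (deriv f) 0 = deriv u 0 := by
    have hev : deriv f =ᶠ[nhds (0:ℂ)] fun z => u z * V z := aux_evb hfid
    rw [hev.deriv_eq, deriv_fun_mul ((hu_an 0 h0m).differentiableAt)
      ((hV_an 0 h0m).differentiableAt), hV0, hdV0]
    ring
  have hduV : ∀ z ∈ ball (0:ℂ) 1, deriv (fun y => u y * V y) z
      = deriv u z * V z + u z * deriv V z := fun z hz =>
    deriv_fun_mul ((hu_an z hz).differentiableAt) ((hV_an z hz).differentiableAt)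
  have hA3 : deriv (deriv (deriv f)) 0 = deriv (deriv u) 0 + deriv (deriv V) 0 := by
    have hev1 : deriv f =ᶠ[nhds (0:ℂ)] fun z => u z * V z := aux_evb hfid
    have hev2 := hev1.deriv
    have hev3 : deriv (fun z => u z * V z) =ᶠ[nhds (0:ℂ)]
        (fun z => deriv u z * V z + u z * deriv V z) := aux_evb hduV
    rw [(hev2.trans hev3).deriv_eq,
      deriv_fun_add (((hu_an.deriv 0 h0m).differentiableAt).fun_mul ((hV_an 0 h0m).differentiableAt))
        (((hu_an 0 h0m).differentiableAt).fun_mul ((hV_an.deriv 0 h0m).differentiableAt)),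
      deriv_fun_mul ((hu_an.deriv 0 h0m).differentiableAt) ((hV_an 0 h0m).differentiableAt),
      deriv_fun_mul ((hu_an 0 h0m).differentiableAt) ((hV_an.deriv 0 h0m).differentiableAt),
      hV0, hdV0, hu0]
    ring
  -- the inverse function
  obtain ⟨r, hr0, hfinv_on⟩ : ∃ r > 0, AnalyticOnNhd ℂ finv (ball (0:ℂ) r) := by
    have h := hfinv.eventually_analyticAt
    rw [Metric.eventually_nhds_iff_ball] at h
    obtain ⟨ε, hε, hh⟩ := h
    exact ⟨ε, hε, fun y hy => hh y hy⟩
  have h0r : (0:ℂ) ∈ ball (0:ℂ) r := mem_ball_self hr0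
  have hfc : Tendsto f (nhds (0:ℂ)) (nhds (0:ℂ)) := by
    have := (hf 0 h0m).continuousAt
    rwa [ContinuousAt, hf0] at this
  have hfball : ∀ᶠ z in nhds (0:ℂ), f z ∈ ball (0:ℂ) r :=
    hfc.eventually (isOpen_ball.eventually_mem h0r)
  have hzball : ∀ᶠ z in nhds (0:ℂ), z ∈ ball (0:ℂ) 1 := isOpen_ball.eventually_mem h0m
  have h1 : ∀ᶠ z in nhds (0:ℂ), deriv finv (f z) * deriv f z = 1 := by
    have hev : (fun z => finv (f z)) =ᶠ[nhds (0:ℂ)] id := hleft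
    have hd := hev.deriv
    filter_upwards [hd, hfball, hzball] with z hdz hfz hz1
    have hcz : deriv (fun y => finv (f y)) z = deriv finv (f z) * deriv f z := by
      have := deriv_comp (x := z) ((hfinv_on (f z) hfz).differentiableAt) ((hf z hz1).differentiableAt)
      simpa [Function.comp_def] using this
    rw [← hcz, hdz, deriv_id]
  have hD1 : deriv finv 0 = 1 := by
    have := h1.self_of_nhds
    rwa [hf0, hf1, mul_one] at this
  have h2i : ∀ᶠ z in nhds (0:ℂ), deriv (deriv finv) (f z) * deriv f z * deriv f z
      + deriv finv (f z) * deriv (deriv f) z = 0 := by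
    have hev : (fun z => deriv finv (f z) * deriv f z) =ᶠ[nhds (0:ℂ)] fun _ => (1:ℂ) := h1
    have hd := hev.deriv
    filter_upwards [hd, hfball, hzball] with z hdz hfz hz1
    have dfin : DifferentiableAt ℂ (fun y => deriv finv (f y)) z := by
      have := (((hfinv_on.deriv) (f z) hfz).comp (hf z hz1)).differentiableAt
      simpa [Function.comp_def] using this
    have hc : deriv (fun y => deriv finv (f y)) z = deriv (deriv finv) (f z) * deriv f z := by
      have := deriv_comp (x := z) (((hfinv_on.deriv) (f z) hfz).differentiableAt)
        ((hf z hz1).differentiableAt)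
      simpa [Function.comp_def] using this
    have hm : deriv (fun y => deriv finv (f y) * deriv f y) z
        = deriv (fun y => deriv finv (f y)) z * deriv f z
          + deriv finv (f z) * deriv (deriv f) z :=
      deriv_fun_mul dfin ((hf.deriv z hz1).differentiableAt)
    have : deriv (deriv finv) (f z) * deriv f z * deriv f z
        + deriv finv (f z) * deriv (deriv f) z = deriv (fun _ => (1:ℂ)) z := by
      rw [← hdz, hm, hc]
    rw [this, deriv_const]
  have hD2 : deriv (deriv finv) 0 = -(deriv (deriv f) 0) := by
    have := h2i.self_of_nhds
    rw [hf0, hf1, hD1] at this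
    linear_combination this
  have hXan : AnalyticAt ℂ (fun z => deriv (deriv finv) (f z)) 0 := by
    have h1' := ((hfinv_on.deriv.deriv) (f 0) (by rw [hf0]; exact h0r)).comp (hf 0 h0m)
    exact h1'.congr (by filter_upwards with y using by simp [Function.comp])
  have hZan : AnalyticAt ℂ (fun z => deriv finv (f z)) 0 := by
    have h1' := ((hfinv_on.deriv) (f 0) (by rw [hf0]; exact h0r)).comp (hf 0 h0m)
    exact h1'.congr (by filter_upwards with y using by simp [Function.comp])
  have hXd : deriv (fun z => deriv (deriv finv) (f z)) 0 = deriv (deriv (deriv finv)) 0 := by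
    have := deriv_comp (x := 0) (((hfinv_on.deriv.deriv) (f 0) (by rw [hf0]; exact h0r)).differentiableAt)
      ((hf 0 h0m).differentiableAt)
    simpa [Function.comp_def, hf0, hf1] using this
  have hZd : deriv (fun z => deriv finv (f z)) 0 = deriv (deriv finv) 0 := by
    have := deriv_comp (x := 0) (((hfinv_on.deriv) (f 0) (by rw [hf0]; exact h0r)).differentiableAt)
      ((hf 0 h0m).differentiableAt)
    simpa [Function.comp_def, hf0, hf1] using this
  have h3 : deriv (deriv (deriv finv)) 0 + 3 * deriv (deriv finv) 0 * deriv (deriv f) 0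
      + deriv (deriv (deriv f)) 0 = 0 := by
    have hev : (fun z => deriv (deriv finv) (f z) * deriv f z * deriv f z
        + deriv finv (f z) * deriv (deriv f) z) =ᶠ[nhds (0:ℂ)] fun _ => (0:ℂ) := h2i
    have hd := hev.deriv_eq
    rw [deriv_const] at hd
    have dX : DifferentiableAt ℂ (fun z => deriv (deriv finv) (f z)) 0 := hXan.differentiableAt
    have dY : DifferentiableAt ℂ (deriv f) 0 := ((hf.deriv) 0 h0m).differentiableAt
    have dZ : DifferentiableAt ℂ (fun z => deriv finv (f z)) 0 := hZan.differentiableAt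
    have dW : DifferentiableAt ℂ (deriv (deriv f)) 0 := ((hf.deriv.deriv) 0 h0m).differentiableAt
    rw [deriv_fun_add ((dX.fun_mul dY).fun_mul dY) (dZ.fun_mul dW), deriv_fun_mul (dX.fun_mul dY) dY,
      deriv_fun_mul dX dY, deriv_fun_mul dZ dW, hXd, hZd] at hd
    beta_reduce at hd
    rw [hf0, hf1, hD1] at hd
    linear_combination hd
  have hD3 : deriv (deriv (deriv finv)) 0
      = 3 * (deriv (deriv f) 0) ^ 2 - deriv (deriv (deriv f)) 0 := by
    linear_combination h3 - 3 * (deriv (deriv f) 0) * hD2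
  have hIT2 : iteratedDeriv 2 finv 0 = deriv (deriv finv) 0 := by
    rw [show (2:ℕ) = 1 + 1 from rfl, iteratedDeriv_succ, iteratedDeriv_one]
  have hIT3 : iteratedDeriv 3 finv 0 = deriv (deriv (deriv finv)) 0 := by
    rw [show (3:ℕ) = 1 + 1 + 1 from rfl, iteratedDeriv_succ, iteratedDeriv_succ,
      iteratedDeriv_one]
  -- final assembly
  intro μ
  set s : ℂ := B₂ - 3 * (2 - μ) * (B₁ : ℂ) ^ 2 / 4 with hsdef
  have hkey : d₃ - μ * d₂ ^ 2
      = -(deriv (deriv V) 0) / 6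
        - ((B₁ : ℂ) * deriv (deriv w) 0 / 2 + s * (deriv w 0) ^ 2) / 3 := by
    rw [hd₂, hd₃, hIT2, hIT3, hD2, hD3, hA2, hA3, hdu0, hddu0, hsdef]
    ring
  rw [hkey]
  have htri : ∀ x y : ℂ, ‖x - y‖ ≤ ‖x‖ + ‖y‖ := by
    intro x y
    simpa [sub_eq_add_neg] using norm_add_le x (-y)
  have habs3 : ‖(3:ℂ)‖ = 3 := by
    rw [show (3:ℂ) = ((3:ℝ):ℂ) by norm_num, Complex.norm_real, Real.norm_eq_abs]
    norm_num
  have habs6 : ‖(6:ℂ)‖ = 6 := by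
    rw [show (6:ℂ) = ((6:ℝ):ℂ) by norm_num, Complex.norm_real, Real.norm_eq_abs]
    norm_num
  have e1 : ‖-(deriv (deriv V) 0) / 6‖ = ‖deriv (deriv V) 0‖ / 6 := by
    rw [norm_div, norm_neg, habs6]
  have eX : ‖(B₁ : ℂ) * deriv (deriv w) 0 / 2‖
      = B₁ * ‖deriv (deriv w) 0‖ / 2 := by
    rw [norm_div, norm_mul, Complex.norm_real, Real.norm_eq_abs, _root_.abs_of_pos hB₁, Complex.norm_two]
  have eY : ‖s * (deriv w 0) ^ 2‖
      = ‖s‖ * (‖deriv w 0‖) ^ 2 := by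
    rw [norm_mul, norm_pow]
  have e2 : ‖((B₁ : ℂ) * deriv (deriv w) 0 / 2 + s * (deriv w 0) ^ 2) / 3‖
      ≤ (B₁ * ‖deriv (deriv w) 0‖ / 2
        + ‖s‖ * (‖deriv w 0‖) ^ 2) / 3 := by
    rw [norm_div, habs3, ← eX, ← eY]
    gcongr
    exact norm_add_le _ _
  have hmaxeq : ‖B₂ / 3 - (2 - μ) * (B₁ : ℂ) ^ 2 / 4‖ = ‖s‖ / 3 := by
    rw [show B₂ / 3 - (2 - μ) * (B₁ : ℂ) ^ 2 / 4 = s / 3 by rw [hsdef]; ring, norm_div, habs3]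
  have h6 : ‖deriv (deriv V) 0‖ / 6 ≤ 1 / 3 := by linarith [hDV]
  have hfin2 : (B₁ * ‖deriv (deriv w) 0‖ / 2
        + ‖s‖ * (‖deriv w 0‖) ^ 2) / 3
      ≤ max (B₁ / 3) (‖B₂ / 3 - (2 - μ) * (B₁ : ℂ) ^ 2 / 4‖) := by
    rw [hmaxeq]
    have hml := le_max_left (B₁ / 3) (‖s‖ / 3)
    have hmr := le_max_right (B₁ / 3) (‖s‖ / 3)
    have hX1 : ‖deriv w 0‖ ≤ 1 := hc1
    have hX0 : 0 ≤ ‖deriv w 0‖ := norm_nonneg _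
    have hXsq : 0 ≤ 1 - (‖deriv w 0‖) ^ 2 := by nlinarith
    have t1 : B₁ * (‖deriv (deriv w) 0‖ / 2)
        ≤ B₁ * (1 - (‖deriv w 0‖) ^ 2) :=
      mul_le_mul_of_nonneg_left hc2 hB₁.le
    have t2 : B₁ * (1 - (‖deriv w 0‖) ^ 2)
        ≤ 3 * max (B₁ / 3) (‖s‖ / 3) * (1 - (‖deriv w 0‖) ^ 2) :=
      mul_le_mul_of_nonneg_right (by linarith) hXsq
    have t3 : ‖s‖ * (‖deriv w 0‖) ^ 2
        ≤ 3 * max (B₁ / 3) (‖s‖ / 3) * (‖deriv w 0‖) ^ 2 :=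
      mul_le_mul_of_nonneg_right (by linarith) (sq_nonneg _)
    nlinarith
  calc ‖-(deriv (deriv V) 0) / 6
        - ((B₁ : ℂ) * deriv (deriv w) 0 / 2 + s * (deriv w 0) ^ 2) / 3‖
      ≤ ‖-(deriv (deriv V) 0) / 6‖
        + ‖((B₁ : ℂ) * deriv (deriv w) 0 / 2 + s * (deriv w 0) ^ 2) / 3‖ :=
        htri _ _
    _ ≤ 1 / 3 + max (B₁ / 3) (‖B₂ / 3 - (2 - μ) * (B₁ : ℂ) ^ 2 / 4‖) := by
        rw [e1]
        exact add_le_add h6 (e2.trans hfin2)
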